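/- For all reals δ > 3/2 and 0 ≤ λ < δ − 1, we have 1 + (δ² − λ²)/max{(1−λ)², (δ−1)²} ≤ 9. -/
import Mathlib

theorem stmt_2 (δ l : ℝ) (hδ : 3/2 < δ) (hl0 : 0 ≤ l) (hl : l < δ - 1) :
    1 + (δ^2 - l^2) / max ((1-l)^2) ((δ-1)^2) ≤ 9 := by
  have key : (δ^2 - l^2) / max ((1-l)^2) ((δ-1)^2) ≤ 8 := by
    rcases le_total ((1-l)^2) ((δ-1)^2) with h | h
    · rw [max_eq_right h]
      have hd : δ - 1 > 0 := by linarith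
      have hpos : (0:ℝ) < (δ-1)^2 := by positivity
      rw [div_le_iff₀ hpos]
      nlinarith [sq_nonneg (δ - 2), sq_nonneg (l - δ + 1), sq_nonneg (δ + l - 2)]
    · rw [max_eq_left h]
      have hpos : (0:ℝ) < (1-l)^2 := by
        have h2 : l < 1/2 := by nlinarith
        nlinarith
      rw [div_le_iff₀ hpos]
      nlinarith [sq_nonneg (δ + l - 2), sq_nonneg (1 - 2*l)]
  linarith
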